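/- Let x > 0 with x ∉ S, where S = { s·log q / log(1 + 1/r) : s, r positive integers }. Then a monic polynomial h ∈ 𝔽_q[t] is x-semi-superior highly composite if and only if h = ĥ(x); in particular there is exactly one x-SSHC polynomial. -/

import Mathlib

open Polynomial

/-- The number of monic divisors of a polynomial. -/
noncomputable def tau {Fq : Type} [Field Fq] (f : Fq[X]) : ℕ :=
  {d : Fq[X] | d.Monic ∧ d ∣ f}.ncard

/-- The multiplicity of `p` in the factorization of `f`. -/
noncomputable def mult {Fq : Type} [Field Fq] (p f : Fq[X]) : ℕ :=
  multiplicity p f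

/-- `h = ĥ(x)`: the monic polynomial whose multiplicity at each monic irreducible `p`
equals `⌊1/(q^{deg p / x} - 1)⌋`. -/
noncomputable def IsHhat {Fq : Type} [Field Fq] [Fintype Fq] (x : ℝ) (h : Fq[X]) : Prop :=
  h.Monic ∧ ∀ p : Fq[X], p.Monic → Irreducible p →
    mult p h = ⌊1 / ((Fintype.card Fq : ℝ) ^ ((p.natDegree : ℝ) / x) - 1)⌋₊

/-- `h` is an `x`-semi-superior highly composite polynomial. -/
noncomputable def IsSSHC {Fq : Type} [Field Fq] [Fintype Fq] (x : ℝ) (h : Fq[X]) : Prop :=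
  h.Monic ∧ ∀ f : Fq[X], f.Monic →
    (tau f : ℝ) * (Fintype.card Fq : ℝ) ^ (-(f.natDegree : ℝ) / x) ≤
    (tau h : ℝ) * (Fintype.card Fq : ℝ) ^ (-(h.natDegree : ℝ) / x)

/-- The set `S_q = { s log q / log(1 + 1/r) : s, r ≥ 1 }`. -/
def Sset (q : ℕ) : Set ℝ :=
  {x : ℝ | ∃ s r : ℕ, 0 < s ∧ 0 < r ∧ x = (s : ℝ) * Real.log q / Real.log (1 + 1 / (r : ℝ))}

open UniqueFactorizationMonoid

section aux

variable {Fq : Type} [Field Fq] [Fintype Fq]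

lemma finite_natDegree_le (N : ℕ) : {f : Fq[X] | f.natDegree ≤ N}.Finite := by
  apply Set.Finite.of_finite_image (f := fun f (i : Fin (N+1)) => f.coeff i)
  · exact Set.toFinite _
  · intro f hf g hg hfg
    ext i
    by_cases hi : i ≤ N
    · exact congrFun hfg ⟨i, Nat.lt_succ_of_le hi⟩
    · rw [Polynomial.coeff_eq_zero_of_natDegree_lt (lt_of_le_of_lt hf (by omega)),
        Polynomial.coeff_eq_zero_of_natDegree_lt (lt_of_le_of_lt hg (by omega))]

lemma divisors_finite {f : Fq[X]} (hf : f ≠ 0) : {d : Fq[X] | d.Monic ∧ d ∣ f}.Finite :=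
  (finite_natDegree_le f.natDegree).subset fun d ⟨_, hd⟩ => Polynomial.natDegree_le_of_dvd hd hf

lemma tau_pos {f : Fq[X]} (hf : f ≠ 0) : 0 < tau f := by
  rw [tau, Set.ncard_pos (divisors_finite hf)]
  exact ⟨1, monic_one, one_dvd f⟩

lemma tau_mul_pow {g p : Fq[X]} (hg : g ≠ 0) (hp : p.Monic) (hirr : Irreducible p)
    (hnd : ¬ p ∣ g) (k : ℕ) : tau (g * p ^ k) = (k + 1) * tau g := by
  induction k with
  | zero => simp [tau]
  | succ k ih =>
    have hpne : p ≠ 0 := hp.ne_zero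
    have hpow : (p : Fq[X]) ^ (k+1) ≠ 0 := pow_ne_zero _ hpne
    have hkey : {d : Fq[X] | d.Monic ∧ d ∣ g * p ^ (k+1)}
        = {d : Fq[X] | d.Monic ∧ d ∣ g * p ^ k} ∪ ((fun d => d * p ^ (k+1)) ''
          {d : Fq[X] | d.Monic ∧ d ∣ g}) := by
      ext d
      constructor
      · rintro ⟨hdm, hdd⟩
        by_cases hc : p ^ (k+1) ∣ d
        · right
          obtain ⟨c, rfl⟩ := hc
          refine ⟨c, ⟨(hp.pow (k+1)).of_mul_monic_left hdm, ?_⟩, mul_comm _ _⟩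
          rw [mul_comm g, mul_dvd_mul_iff_left hpow] at hdd
          exact hdd
        · left
          obtain ⟨n, u, hu, rfl⟩ := WfDvdMonoid.max_power_factor hdm.ne_zero hirr
          have hn : n ≤ k := by
            by_contra hn
            exact hc ((pow_dvd_pow p (by omega)).trans (dvd_mul_right _ _))
          refine ⟨hdm, ?_⟩
          have hcop : IsCoprime u (p ^ (k+1)) :=
            ((hirr.coprime_iff_not_dvd.mpr hu).symm).pow_right
          have hug : u ∣ g := hcop.dvd_of_dvd_mul_right (dvd_trans (Dvd.intro_left _ rfl) hdd)
          calc p ^ n * u ∣ p ^ k * g := mul_dvd_mul (pow_dvd_pow p hn) hug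
          _ = g * p ^ k := mul_comm _ _
      · rintro (⟨hm, hd⟩ | ⟨c, ⟨hcm, hcd⟩, rfl⟩)
        · exact ⟨hm, hd.trans (by rw [pow_succ, ← mul_assoc]; exact dvd_mul_right _ _)⟩
        · exact ⟨hcm.mul (hp.pow (k+1)), mul_dvd_mul_right hcd _⟩
    have hdisj : Disjoint {d : Fq[X] | d.Monic ∧ d ∣ g * p ^ k}
        ((fun d => d * p ^ (k+1)) '' {d : Fq[X] | d.Monic ∧ d ∣ g}) := by
      rw [Set.disjoint_left]
      rintro d ⟨_, hdd⟩ ⟨c, _, rfl⟩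
      have : p ^ (k+1) ∣ g * p ^ k := (Dvd.intro_left c rfl).trans hdd
      rw [pow_succ, mul_comm g] at this
      exact hnd ((mul_dvd_mul_iff_left (pow_ne_zero k hpne)).mp this)
    have hmul : g * p ^ (k+1) ≠ 0 := mul_ne_zero hg hpow
    rw [tau, hkey, Set.ncard_union_eq hdisj (divisors_finite (mul_ne_zero hg (pow_ne_zero k hpne)))
      ((divisors_finite hg).image _),
      Set.ncard_image_of_injective _ (mul_left_injective₀ hpow)]
    rw [tau] at ih
    rw [ih, tau]
    ring

end aux

section aux2

noncomputable def aexp (q : ℕ) (x : ℝ) (d : ℕ) : ℕ :=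
  ⌊1 / ((q:ℝ) ^ ((d:ℝ)/x) - 1)⌋₊

section real

variable {q : ℕ} {x : ℝ} {d e : ℕ}

lemma Y_gt_one (hq : 2 ≤ q) (hx : 0 < x) (hd : 0 < d) : 1 < (q:ℝ) ^ ((d:ℝ)/x) := by
  rw [Real.one_lt_rpow_iff_of_pos (by positivity)]
  left
  constructor
  · exact_mod_cast Nat.lt_of_lt_of_le one_lt_two hq
  · positivity

lemma t_ne (hq : 2 ≤ q) (hx : 0 < x) (hxS : x ∉ Sset q) (hd : 0 < d) (r : ℕ) (hr : 0 < r) :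
    1 / ((q:ℝ) ^ ((d:ℝ)/x) - 1) ≠ (r : ℝ) := by
  intro h
  set Y := (q:ℝ) ^ ((d:ℝ)/x) with hY
  have hY1 : 1 < Y := Y_gt_one hq hx hd
  have hr0 : (0:ℝ) < r := by exact_mod_cast hr
  have h5 : 1 = (r:ℝ) * (Y - 1) := (div_eq_iff (by linarith)).mp h
  have hYr : Y = 1 + 1 / (r:ℝ) := by
    field_simp
    nlinarith [h5]
  apply hxS
  refine ⟨d, r, hd, hr, ?_⟩
  have hq0 : (0:ℝ) < q := by positivity
  have hlog : Real.log Y = ((d:ℝ)/x) * Real.log q := Real.log_rpow hq0 _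
  have hL : 0 < Real.log (1 + 1/(r:ℝ)) := by
    apply Real.log_pos
    rw [← hYr]; exact hY1
  rw [eq_div_iff (ne_of_gt hL), ← hYr, hlog]
  field_simp

lemma step_up_gen {Y : ℝ} (hY : 1 < Y) {e A : ℕ} (hA : A = ⌊1/(Y-1)⌋₊)
    (hne : 1/(Y-1) ≠ ((e:ℕ):ℝ) + 1) (he : e + 1 ≤ A) :
    ((e:ℝ)+1) * (Y⁻¹)^e < ((e:ℝ)+2) * (Y⁻¹)^(e+1) := by
  have hY0 : (0:ℝ) < Y := by linarith
  have hY1 : (0:ℝ) < Y - 1 := by linarith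
  have ht0 : (0:ℝ) ≤ 1/(Y-1) := by positivity
  have h1 : ((A:ℕ):ℝ) ≤ 1/(Y-1) := hA ▸ Nat.floor_le ht0
  have h2 : ((e:ℝ)+1) ≤ (A:ℝ) := by exact_mod_cast he
  have h3 : ((e:ℝ)+1) < 1/(Y-1) := lt_of_le_of_ne (le_trans h2 h1) (Ne.symm hne)
  have h4 : ((e:ℝ)+1) * (Y-1) < 1 := (lt_div_iff₀ hY1).mp h3
  have key : ((e:ℝ)+1) * Y < (e:ℝ)+2 := by nlinarith
  have hz : (0:ℝ) < (Y⁻¹)^e := by positivity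
  rw [pow_succ]
  calc ((e:ℝ)+1) * (Y⁻¹)^e < (((e:ℝ)+2) * Y⁻¹) * (Y⁻¹)^e := by
        apply mul_lt_mul_of_pos_right _ hz
        rw [← div_eq_mul_inv, lt_div_iff₀ hY0]
        exact key
      _ = ((e:ℝ)+2) * ((Y⁻¹)^e * Y⁻¹) := by ring

lemma step_down_gen {Y : ℝ} (hY : 1 < Y) {e A : ℕ} (hA : A = ⌊1/(Y-1)⌋₊) (he : A ≤ e) :
    ((e:ℝ)+2) * (Y⁻¹)^(e+1) < ((e:ℝ)+1) * (Y⁻¹)^e := by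
  have hY0 : (0:ℝ) < Y := by linarith
  have hY1 : (0:ℝ) < Y - 1 := by linarith
  have h1 : 1/(Y-1) < (A:ℝ) + 1 := hA ▸ Nat.lt_floor_add_one _
  have h2 : (A:ℝ) ≤ (e:ℝ) := by exact_mod_cast he
  have h3 : 1/(Y-1) < (e:ℝ)+1 := by linarith
  have h4 : 1 < ((e:ℝ)+1) * (Y-1) := (div_lt_iff₀ hY1).mp h3
  have key : (e:ℝ)+2 < ((e:ℝ)+1) * Y := by nlinarith
  have hz : (0:ℝ) < (Y⁻¹)^e := by positivity
  rw [pow_succ]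
  calc ((e:ℝ)+2) * ((Y⁻¹)^e * Y⁻¹) = (((e:ℝ)+2) * Y⁻¹) * (Y⁻¹)^e := by ring
    _ < ((e:ℝ)+1) * (Y⁻¹)^e := by
        apply mul_lt_mul_of_pos_right _ hz
        rw [← div_eq_mul_inv, div_lt_iff₀ hY0]
        exact key

end real

section wrap

variable {q : ℕ} {x : ℝ} {d e : ℕ}

lemma w_eq (hq : 2 ≤ q) : (q:ℝ) ^ (-(d:ℝ)/x) = ((q:ℝ) ^ ((d:ℝ)/x))⁻¹ := by
  rw [neg_div, Real.rpow_neg (by positivity)]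

lemma step_up' (hq : 2 ≤ q) (hx : 0 < x) (hxS : x ∉ Sset q) (hd : 0 < d)
    (he : e + 1 ≤ aexp q x d) :
    ((e:ℝ)+1) * ((q:ℝ)^(-(d:ℝ)/x))^e < ((e:ℝ)+2) * ((q:ℝ)^(-(d:ℝ)/x))^(e+1) := by
  rw [w_eq hq]
  refine step_up_gen (Y_gt_one hq hx hd) rfl ?_ he
  have := t_ne hq hx hxS hd (e+1) (by omega)
  push_cast at this
  exact this

lemma step_down' (hq : 2 ≤ q) (hx : 0 < x) (hd : 0 < d) (he : aexp q x d ≤ e) :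
    ((e:ℝ)+2) * ((q:ℝ)^(-(d:ℝ)/x))^(e+1) < ((e:ℝ)+1) * ((q:ℝ)^(-(d:ℝ)/x))^e := by
  rw [w_eq hq]
  exact step_down_gen (Y_gt_one hq hx hd) rfl he

lemma aexp_eq_zero (hq : 2 ≤ q) (hx : 0 < x) (hd : 0 < d) (hxd : x < (d:ℝ)) :
    aexp q x d = 0 := by
  have h2 : (2:ℝ) < (q:ℝ) ^ ((d:ℝ)/x) := by
    calc (2:ℝ) = (2:ℝ) ^ (1:ℝ) := (Real.rpow_one 2).symm
      _ < (2:ℝ) ^ ((d:ℝ)/x) := by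
          rw [Real.rpow_lt_rpow_left_iff one_lt_two]
          rw [lt_div_iff₀ hx]
          linarith
      _ ≤ (q:ℝ) ^ ((d:ℝ)/x) := by
          apply Real.rpow_le_rpow (by norm_num) (by exact_mod_cast hq) (by positivity)
  rw [aexp, Nat.floor_eq_zero]
  rw [div_lt_one (by linarith)]
  linarith

end wrap


end aux2

section aux3

variable {Fq : Type} [Field Fq] [Fintype Fq] [DecidableEq Fq]

/-- members of `normalizedFactors` are monic irreducible -/
lemma monic_irr_of_mem_nf {f p : Fq[X]} (hp : p ∈ normalizedFactors f) :
    p.Monic ∧ Irreducible p := by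
  have hirr := irreducible_of_normalized_factor p hp
  have hnorm := normalize_normalized_factor p hp
  exact ⟨hnorm ▸ Polynomial.monic_normalize hirr.ne_zero, hirr⟩

lemma mult_eq_cnt {p f : Fq[X]} (hm : p.Monic) (hi : Irreducible p) (hf : f ≠ 0) :
    multiplicity p f = (normalizedFactors f).count p :=
  multiplicity_eq_of_emultiplicity_eq_some
    (by rw [emultiplicity_eq_count_normalizedFactors hi hf, hm.normalize_eq_self])

/-- decomposition `f = g * p ^ count` with `p ∤ g` -/
lemma exists_decomp {f p : Fq[X]} (hf : f.Monic) (hm : p.Monic) (hi : Irreducible p) :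
    ∃ g : Fq[X], g.Monic ∧ ¬ p ∣ g ∧ f = g * p ^ ((normalizedFactors f).count p) := by
  classical
  obtain ⟨n, u, hu, hfe⟩ := WfDvdMonoid.max_power_factor hf.ne_zero hi
  have hu0 : u ≠ 0 := fun h => hu (by simp [h])
  have hum : u.Monic := by
    have : (p ^ n * u).Monic := hfe ▸ hf
    exact (hm.pow n).of_mul_monic_left this
  have hcnt : (normalizedFactors f).count p = n := by
    rw [hfe, normalizedFactors_mul (pow_ne_zero _ hm.ne_zero) hu0, Multiset.count_add,
      normalizedFactors_pow, normalizedFactors_irreducible hi, hm.normalize_eq_self,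
      Multiset.count_nsmul, Multiset.count_singleton, if_pos rfl]
    have : (normalizedFactors u).count p = 0 := by
      rw [Multiset.count_eq_zero]
      intro hmem
      exact hu (dvd_of_mem_normalizedFactors hmem)
    omega
  exact ⟨u, hum, hu, by rw [hcnt, hfe, mul_comm]⟩

/-- normalized factors of a product of powers of distinct monic irreducibles -/
lemma nf_prod_pow (s : Finset Fq[X]) (hs : ∀ p ∈ s, p.Monic ∧ Irreducible p) (m : Fq[X] → ℕ) :
    normalizedFactors (∏ p ∈ s, p ^ m p) = ∑ p ∈ s, Multiset.replicate (m p) p := by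
  classical
  induction s using Finset.induction with
  | empty => simp
  | @insert a s ha ih =>
    have hma := hs a (Finset.mem_insert_self a s)
    have hprodm : (∏ p ∈ s, p ^ m p).Monic :=
      monic_prod_of_monic _ _ (fun p hp => ((hs p (Finset.mem_insert_of_mem hp)).1).pow _)
    rw [Finset.prod_insert ha, normalizedFactors_mul (pow_ne_zero _ hma.1.ne_zero) hprodm.ne_zero,
      normalizedFactors_pow, normalizedFactors_irreducible hma.2, hma.1.normalize_eq_self,
      ih (fun p hp => hs p (Finset.mem_insert_of_mem hp)), Finset.sum_insert ha,
      Multiset.nsmul_singleton]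

noncomputable def PPset (Fq : Type) [Field Fq] [Fintype Fq] [DecidableEq Fq] (x : ℝ) : Finset Fq[X] :=
  (Set.Finite.subset (finite_natDegree_le ⌈x⌉₊)
    (fun p (hp : p ∈ {p : Fq[X] | p.natDegree ≤ ⌈x⌉₊ ∧ p.Monic ∧ Irreducible p}) => hp.1)).toFinset

lemma mem_PPset {x : ℝ} {p : Fq[X]} :
    p ∈ PPset Fq x ↔ p.natDegree ≤ ⌈x⌉₊ ∧ p.Monic ∧ Irreducible p := by
  rw [PPset, Set.Finite.mem_toFinset]; rfl

noncomputable def hhat (Fq : Type) [Field Fq] [Fintype Fq] [DecidableEq Fq] (x : ℝ) : Fq[X] :=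
  ∏ p ∈ PPset Fq x, p ^ (aexp (Fintype.card Fq) x p.natDegree)

lemma hhat_monic (x : ℝ) : (hhat Fq x).Monic :=
  monic_prod_of_monic _ _ (fun p hp => ((mem_PPset.mp hp).2.1).pow _)

lemma cnt_hhat {x : ℝ} (hx : 0 < x) {p : Fq[X]} (hm : p.Monic) (hi : Irreducible p) :
    (normalizedFactors (hhat Fq x)).count p = aexp (Fintype.card Fq) x p.natDegree := by
  classical
  have hq : 2 ≤ Fintype.card Fq := Fintype.one_lt_card
  rw [hhat, nf_prod_pow _ (fun r hr => (mem_PPset.mp hr).2), Multiset.count_sum']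
  by_cases hp : p ∈ PPset Fq x
  · rw [Finset.sum_eq_single p (fun r _ hrp => by
      rw [Multiset.count_replicate, if_neg hrp]) (fun h => absurd hp h)]
    rw [Multiset.count_replicate, if_pos rfl]
  · have h0 : ∀ r ∈ PPset Fq x, (Multiset.replicate (aexp (Fintype.card Fq) x r.natDegree) r).count p = 0 := by
      intro r hr
      rw [Multiset.count_replicate, if_neg]
      rintro rfl
      exact hp hr
    rw [Finset.sum_congr rfl h0, Finset.sum_const, smul_eq_mul, mul_zero]
    have hdeg : ⌈x⌉₊ < p.natDegree := by
      by_contra hle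
      exact hp (mem_PPset.mpr ⟨by omega, hm, hi⟩)
    have : x < (p.natDegree : ℝ) := lt_of_le_of_lt (Nat.le_ceil x) (by exact_mod_cast hdeg)
    rw [aexp_eq_zero hq hx hi.natDegree_pos this]

noncomputable def Efun (x : ℝ) (f : Fq[X]) : ℝ :=
  (tau f : ℝ) * (Fintype.card Fq : ℝ) ^ (-(f.natDegree : ℝ) / x)

lemma Efun_eq {x : ℝ} {g p : Fq[X]} (hg : g.Monic) (hp : p.Monic) (hi : Irreducible p)
    (hnd : ¬ p ∣ g) (e : ℕ) :
    Efun x (g * p ^ e) = ((tau g : ℝ) * (Fintype.card Fq : ℝ) ^ (-(g.natDegree : ℝ) / x)) *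
      (((e:ℝ)+1) * ((Fintype.card Fq : ℝ) ^ (-(p.natDegree : ℝ) / x))^e) := by
  have hq0 : (0:ℝ) < (Fintype.card Fq : ℝ) := by
    have := Fintype.card_pos (α := Fq); exact_mod_cast this
  rw [Efun, tau_mul_pow hg.ne_zero hp hi hnd e,
    Polynomial.natDegree_mul hg.ne_zero (pow_ne_zero _ hp.ne_zero), natDegree_pow]
  have hexp : (-(↑(g.natDegree + e * p.natDegree)) / x : ℝ)
      = (-(g.natDegree:ℝ)/x) + (-(p.natDegree:ℝ)/x) * (e:ℝ) := by push_cast; ring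
  rw [hexp, Real.rpow_add hq0, Real.rpow_mul hq0.le, Real.rpow_natCast]
  push_cast
  ring

lemma main_le {x : ℝ} (hx : 0 < x) (hxS : x ∉ Sset (Fintype.card Fq)) :
    ∀ n : ℕ, ∀ f : Fq[X], f.Monic →
      ((normalizedFactors f - normalizedFactors (hhat Fq x)).card
        + (normalizedFactors (hhat Fq x) - normalizedFactors f).card = n) →
      Efun x f ≤ Efun x (hhat Fq x) ∧ (f ≠ hhat Fq x → Efun x f < Efun x (hhat Fq x)) := by
  have hq : 2 ≤ Fintype.card Fq := Fintype.one_lt_card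
  have hq0 : (0:ℝ) < (Fintype.card Fq : ℝ) := by
    have := Fintype.card_pos (α := Fq); exact_mod_cast this
  intro n
  induction n with
  | zero =>
    intro f hf hN
    have e1 : normalizedFactors f - normalizedFactors (hhat Fq x) = 0 :=
      Multiset.card_eq_zero.mp (by omega)
    have e2 : normalizedFactors (hhat Fq x) - normalizedFactors f = 0 :=
      Multiset.card_eq_zero.mp (by omega)
    have h1 : normalizedFactors f = normalizedFactors (hhat Fq x) :=
      le_antisymm (tsub_eq_zero_iff_le.mp e1) (tsub_eq_zero_iff_le.mp e2)
    have hassoc : Associated f (hhat Fq x) :=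
      (prod_normalizedFactors hf.ne_zero).symm.trans
        (h1 ▸ prod_normalizedFactors (hhat_monic x).ne_zero)
    have heq : f = hhat Fq x := Polynomial.eq_of_monic_of_associated hf (hhat_monic x) hassoc
    exact ⟨le_of_eq (by rw [heq]), fun h => absurd heq h⟩
  | succ n ih =>
    intro f hf hN
    have hcases : normalizedFactors f - normalizedFactors (hhat Fq x) ≠ 0
        ∨ normalizedFactors (hhat Fq x) - normalizedFactors f ≠ 0 := by
      by_contra hcon
      push_neg at hcon
      rw [hcon.1, hcon.2] at hN
      simp at hN
    have key : ∃ f' : Fq[X], f'.Monic ∧ Efun x f < Efun x f' ∧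
        (normalizedFactors f' - normalizedFactors (hhat Fq x)).card
          + (normalizedFactors (hhat Fq x) - normalizedFactors f').card = n := by
      rcases hcases with hc | hc
      · -- too many factors at some p : divide by p
        obtain ⟨p, hp⟩ := Multiset.exists_mem_of_ne_zero hc
        have hpf : p ∈ normalizedFactors f := Multiset.mem_of_le (tsub_le_self) hp
        obtain ⟨hpm, hpi⟩ := monic_irr_of_mem_nf hpf
        have hcnt : (normalizedFactors (hhat Fq x)).count p < (normalizedFactors f).count p := by
          have := Multiset.count_pos.mpr hp
          rw [Multiset.count_sub] at this
          omega
        obtain ⟨g, hgm, hgnd, hfe⟩ := exists_decomp hf hpm hpi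
        obtain ⟨e', hee⟩ : ∃ e', (normalizedFactors f).count p = e' + 1 :=
          ⟨(normalizedFactors f).count p - 1, by omega⟩
        rw [hee] at hfe
        have hA : (normalizedFactors (hhat Fq x)).count p
            = aexp (Fintype.card Fq) x p.natDegree := cnt_hhat hx hpm hpi
        have hcg : (normalizedFactors g).count p = 0 :=
          Multiset.count_eq_zero.mpr (fun hm => hgnd (dvd_of_mem_normalizedFactors hm))
        have hale : aexp (Fintype.card Fq) x p.natDegree ≤ e' := by omega
        refine ⟨g * p ^ e', hgm.mul (hpm.pow e'), ?_, ?_⟩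
        · rw [hfe, Efun_eq hgm hpm hpi hgnd (e'+1), Efun_eq hgm hpm hpi hgnd e']
          apply mul_lt_mul_of_pos_left _ (mul_pos (by exact_mod_cast tau_pos hgm.ne_zero)
            (Real.rpow_pos_of_pos hq0 _))
          have hc2 : ((↑(e'+1):ℝ)+1) = (e':ℝ)+2 := by push_cast; ring
          rw [hc2]
          exact step_down' hq hx hpi.natDegree_pos hale
        · have hnf_f : normalizedFactors f
              = normalizedFactors g + Multiset.replicate (e'+1) p := by
            rw [hfe, normalizedFactors_mul hgm.ne_zero (pow_ne_zero _ hpm.ne_zero),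
              normalizedFactors_pow, normalizedFactors_irreducible hpi, hpm.normalize_eq_self,
              Multiset.nsmul_singleton]
          have hnf_f' : normalizedFactors (g * p ^ e')
              = normalizedFactors g + Multiset.replicate e' p := by
            rw [normalizedFactors_mul hgm.ne_zero (pow_ne_zero _ hpm.ne_zero),
              normalizedFactors_pow, normalizedFactors_irreducible hpi, hpm.normalize_eq_self,
              Multiset.nsmul_singleton]
          have hI1 : normalizedFactors f - normalizedFactors (hhat Fq x)
              = (normalizedFactors (g * p ^ e') - normalizedFactors (hhat Fq x)) + {p} := by
            ext r
            by_cases hr : r = p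
            · subst hr
              simp only [Multiset.count_add, Multiset.count_sub, hnf_f, hnf_f',
                Multiset.count_replicate, Multiset.count_singleton, if_true, eq_self_iff_true,
                hcg]
              omega
            · simp only [Multiset.count_add, Multiset.count_sub, hnf_f, hnf_f',
                Multiset.count_replicate, Multiset.count_singleton, hr, Ne.symm hr,
                if_false, hcg]
              omega
          have hI2 : normalizedFactors (hhat Fq x) - normalizedFactors f
              = normalizedFactors (hhat Fq x) - normalizedFactors (g * p ^ e') := by
            ext r
            by_cases hr : r = p
            · subst hr
              simp only [Multiset.count_sub, hnf_f, hnf_f', Multiset.count_add,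
                Multiset.count_replicate, if_true, eq_self_iff_true, hcg]
              omega
            · simp only [Multiset.count_sub, hnf_f, hnf_f', Multiset.count_add,
                Multiset.count_replicate, hr, Ne.symm hr, if_false, hcg]
          rw [hI1, hI2] at hN
          rw [Multiset.card_add, Multiset.card_singleton] at hN
          omega
      · -- too few factors at some p : multiply by p
        obtain ⟨p, hp⟩ := Multiset.exists_mem_of_ne_zero hc
        have hpH : p ∈ normalizedFactors (hhat Fq x) := Multiset.mem_of_le (tsub_le_self) hp
        obtain ⟨hpm, hpi⟩ := monic_irr_of_mem_nf hpH
        have hcnt : (normalizedFactors f).count p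
            < (normalizedFactors (hhat Fq x)).count p := by
          have := Multiset.count_pos.mpr hp
          rw [Multiset.count_sub] at this
          omega
        obtain ⟨g, hgm, hgnd, hfe⟩ := exists_decomp hf hpm hpi
        set e := (normalizedFactors f).count p with hee
        have hA : (normalizedFactors (hhat Fq x)).count p
            = aexp (Fintype.card Fq) x p.natDegree := cnt_hhat hx hpm hpi
        have hcg : (normalizedFactors g).count p = 0 :=
          Multiset.count_eq_zero.mpr (fun hm => hgnd (dvd_of_mem_normalizedFactors hm))
        have hale : e + 1 ≤ aexp (Fintype.card Fq) x p.natDegree := by omega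
        refine ⟨g * p ^ (e+1), hgm.mul (hpm.pow (e+1)), ?_, ?_⟩
        · rw [hfe, Efun_eq hgm hpm hpi hgnd e, Efun_eq hgm hpm hpi hgnd (e+1)]
          apply mul_lt_mul_of_pos_left _ (mul_pos (by exact_mod_cast tau_pos hgm.ne_zero)
            (Real.rpow_pos_of_pos hq0 _))
          have hc2 : ((↑(e+1):ℝ)+1) = (e:ℝ)+2 := by push_cast; ring
          rw [hc2]
          exact step_up' hq hx hxS hpi.natDegree_pos hale
        · have hnf_f : normalizedFactors f
              = normalizedFactors g + Multiset.replicate e p := by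
            rw [hfe, normalizedFactors_mul hgm.ne_zero (pow_ne_zero _ hpm.ne_zero),
              normalizedFactors_pow, normalizedFactors_irreducible hpi, hpm.normalize_eq_self,
              Multiset.nsmul_singleton]
          have hnf_f' : normalizedFactors (g * p ^ (e+1))
              = normalizedFactors g + Multiset.replicate (e+1) p := by
            rw [normalizedFactors_mul hgm.ne_zero (pow_ne_zero _ hpm.ne_zero),
              normalizedFactors_pow, normalizedFactors_irreducible hpi, hpm.normalize_eq_self,
              Multiset.nsmul_singleton]
          have hI1 : normalizedFactors (hhat Fq x) - normalizedFactors f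
              = (normalizedFactors (hhat Fq x) - normalizedFactors (g * p ^ (e+1))) + {p} := by
            ext r
            by_cases hr : r = p
            · subst hr
              simp only [Multiset.count_add, Multiset.count_sub, hnf_f, hnf_f',
                Multiset.count_replicate, Multiset.count_singleton, if_true, eq_self_iff_true,
                hcg]
              omega
            · simp only [Multiset.count_add, Multiset.count_sub, hnf_f, hnf_f',
                Multiset.count_replicate, Multiset.count_singleton, hr, Ne.symm hr,
                if_false, hcg]
              omega
          have hI2 : normalizedFactors f - normalizedFactors (hhat Fq x)
              = normalizedFactors (g * p ^ (e+1)) - normalizedFactors (hhat Fq x) := by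
            ext r
            by_cases hr : r = p
            · subst hr
              simp only [Multiset.count_sub, hnf_f, hnf_f', Multiset.count_add,
                Multiset.count_replicate, if_true, eq_self_iff_true, hcg]
              omega
            · simp only [Multiset.count_sub, hnf_f, hnf_f', Multiset.count_add,
                Multiset.count_replicate, hr, Ne.symm hr, if_false, hcg]
          rw [hI1, hI2] at hN
          rw [Multiset.card_add, Multiset.card_singleton] at hN
          omega
    obtain ⟨f', hf'm, hEf, hN'⟩ := key
    obtain ⟨hle, _⟩ := ih f' hf'm hN'
    have hlt := lt_of_lt_of_le hEf hle
    exact ⟨hlt.le, fun _ => hlt⟩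


lemma isHhat_hhat {Fq : Type} [Field Fq] [Fintype Fq] [DecidableEq Fq] {x : ℝ} (hx : 0 < x) :
    IsHhat x (hhat Fq x) := by
  refine ⟨hhat_monic x, fun p hm hi => ?_⟩
  show multiplicity p (hhat Fq x) = _
  rw [mult_eq_cnt hm hi (hhat_monic x).ne_zero, cnt_hhat hx hm hi]
  rfl

lemma isHhat_unique {Fq : Type} [Field Fq] [Fintype Fq] [DecidableEq Fq] {x : ℝ}
    {h1 h2 : Fq[X]} (H1 : IsHhat x h1) (H2 : IsHhat x h2) : h1 = h2 := by
  have hnf : normalizedFactors h1 = normalizedFactors h2 := by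
    ext r
    by_cases hr : r.Monic ∧ Irreducible r
    · rw [← mult_eq_cnt hr.1 hr.2 H1.1.ne_zero, ← mult_eq_cnt hr.1 hr.2 H2.1.ne_zero]
      have e1 := H1.2 r hr.1 hr.2
      have e2 := H2.2 r hr.1 hr.2
      exact e1.trans e2.symm
    · rw [Multiset.count_eq_zero.mpr (fun hm => hr (monic_irr_of_mem_nf hm)),
        Multiset.count_eq_zero.mpr (fun hm => hr (monic_irr_of_mem_nf hm))]
  exact Polynomial.eq_of_monic_of_associated H1.1 H2.1
    ((prod_normalizedFactors H1.1.ne_zero).symm.trans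
      (hnf ▸ prod_normalizedFactors H2.1.ne_zero))

end aux3

/-- For `x ∉ S`, a monic polynomial is `x`-semi-superior highly composite iff it equals
`ĥ(x)`; in particular there is exactly one `x`-SSHC polynomial. -/
theorem sshc_iff_hhat_of_not_mem_S {Fq : Type} [Field Fq] [Fintype Fq]
    (x : ℝ) (hx : 0 < x) (hxS : x ∉ Sset (Fintype.card Fq)) :
    (∀ h : Fq[X], IsSSHC x h ↔ IsHhat x h) ∧ (∃! h : Fq[X], IsSSHC x h) := by
  classical
  have main := main_le hx hxS
  have hSH : IsSSHC x (hhat Fq x) := by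
    refine ⟨hhat_monic x, fun f hf => ?_⟩
    exact (main _ f hf rfl).1
  have hiff : ∀ h : Fq[X], IsSSHC x h ↔ IsHhat x h := by
    intro h
    constructor
    · intro hS
      have hEH := hS.2 (hhat Fq x) (hhat_monic x)
      have heq : h = hhat Fq x := by
        by_contra hne
        exact absurd hEH (not_le.mpr ((main _ h hS.1 rfl).2 hne))
      rw [heq]
      exact isHhat_hhat hx
    · intro hH
      rw [isHhat_unique hH (isHhat_hhat hx)]
      exact hSH
  exact ⟨hiff, ⟨hhat Fq x, hSH,
    fun g hg => isHhat_unique ((hiff g).mp hg) (isHhat_hhat hx)⟩⟩
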